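/- Let R = k[x_1,...,x_d] with k a field of characteristic 0 and α ∈ Z_{≥0}^d. For the principal monomial ideal I = (x^α), the n-th differential power is the principal ideal I^⟨n⟩ = (∏_{i ∈ supp(α)} x_i^{α_i + n − 1}). -/

import Mathlib

/-- `IsDiffOp A n φ` says that the `A`-linear endomorphism `φ` of `R` is an
`A`-linear differential operator of order at most `n`. -/
def IsDiffOp (A : Type*) {R : Type*} [CommRing A] [CommRing R] [Algebra A R] :
    ℕ → (R →ₗ[A] R) → Prop
  | 0 => fun φ => ∃ r : R, φ = LinearMap.mulLeft A r
  | n + 1 => fun φ => ∀ a : R,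
      IsDiffOp A n (φ ∘ₗ LinearMap.mulLeft A a - LinearMap.mulLeft A a ∘ₗ φ)

theorem isDiffOp_comp_mulLeft (A : Type*) {R : Type*} [CommRing A] [CommRing R]
    [Algebra A R] (x : R) (n : ℕ) :
    ∀ φ : R →ₗ[A] R, IsDiffOp A n φ → IsDiffOp A n (φ ∘ₗ LinearMap.mulLeft A x) := by
  induction n with
  | zero =>
    rintro φ ⟨r, rfl⟩
    exact ⟨r * x, by ext y; simp [mul_assoc]⟩
  | succ n ih =>
    intro φ h a
    have h2 := ih _ (h a)
    have key : (φ ∘ₗ LinearMap.mulLeft A x) ∘ₗ LinearMap.mulLeft A a -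
        LinearMap.mulLeft A a ∘ₗ (φ ∘ₗ LinearMap.mulLeft A x) =
        (φ ∘ₗ LinearMap.mulLeft A a - LinearMap.mulLeft A a ∘ₗ φ) ∘ₗ LinearMap.mulLeft A x := by
      ext y
      simp [mul_left_comm]
    rw [key]
    exact h2

/-- The `n`-th differential power of an ideal `I` of the `A`-algebra `R`:
the set of `r ∈ R` such that `∂ r ∈ I` for every `A`-linear differential
operator `∂` of order at most `n - 1`. -/
def diffPow (A : Type*) {R : Type*} [CommRing A] [CommRing R] [Algebra A R]
    (n : ℕ) (I : Ideal R) : Ideal R where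
  carrier := {r | ∀ φ : R →ₗ[A] R, IsDiffOp A (n - 1) φ → φ r ∈ I}
  add_mem' := fun hx hy φ hφ => by simp [map_add]; exact I.add_mem (hx φ hφ) (hy φ hφ)
  zero_mem' := fun φ _ => by simpa using I.zero_mem
  smul_mem' := fun c x hx => by
    intro φ hφ
    have := hx (φ ∘ₗ LinearMap.mulLeft A c) (isDiffOp_comp_mulLeft A c _ φ hφ)
    simpa [smul_eq_mul] using this


section Aux

open MvPolynomial Finsupp

variable (A : Type*) {R : Type*} [CommRing A] [CommRing R] [Algebra A R]

theorem isDiffOp_mono_succ (n : ℕ) :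
    ∀ φ : R →ₗ[A] R, IsDiffOp A n φ → IsDiffOp A (n + 1) φ := by
  induction n with
  | zero =>
    rintro φ ⟨r, rfl⟩ a
    exact ⟨0, LinearMap.ext fun y => by simp [mul_left_comm, mul_comm]⟩
  | succ n ih =>
    intro φ h a
    exact ih _ (h a)

theorem isDiffOp_mono {m n : ℕ} (φ : R →ₗ[A] R) (hφ : IsDiffOp A m φ) (h : m ≤ n) :
    IsDiffOp A n φ := by
  obtain ⟨c, rfl⟩ := Nat.exists_eq_add_of_le h
  clear h
  induction c with
  | zero => exact hφ
  | succ c ih => exact isDiffOp_mono_succ A (m + c) φ ih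

theorem isDiffOp_add (n : ℕ) :
    ∀ φ ψ : R →ₗ[A] R, IsDiffOp A n φ → IsDiffOp A n ψ → IsDiffOp A n (φ + ψ) := by
  induction n with
  | zero =>
    rintro φ ψ ⟨r, rfl⟩ ⟨s, rfl⟩
    exact ⟨r + s, LinearMap.ext fun y => by simp [add_mul]⟩
  | succ n ih =>
    intro φ ψ hφ hψ a
    have key : (φ + ψ) ∘ₗ LinearMap.mulLeft A a - LinearMap.mulLeft A a ∘ₗ (φ + ψ) =
        (φ ∘ₗ LinearMap.mulLeft A a - LinearMap.mulLeft A a ∘ₗ φ) +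
        (ψ ∘ₗ LinearMap.mulLeft A a - LinearMap.mulLeft A a ∘ₗ ψ) :=
      LinearMap.ext fun y => by
        simp only [LinearMap.sub_apply, LinearMap.add_apply, LinearMap.comp_apply,
          LinearMap.mulLeft_apply, map_add, mul_add]
        ring
    rw [key]
    exact ih _ _ (hφ a) (hψ a)

theorem isDiffOp_mulLeft_comp (r : R) (n : ℕ) :
    ∀ φ : R →ₗ[A] R, IsDiffOp A n φ → IsDiffOp A n (LinearMap.mulLeft A r ∘ₗ φ) := by
  induction n with
  | zero =>
    rintro φ ⟨s, rfl⟩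
    exact ⟨r * s, LinearMap.ext fun y => by simp [mul_assoc]⟩
  | succ n ih =>
    intro φ h a
    have key : (LinearMap.mulLeft A r ∘ₗ φ) ∘ₗ LinearMap.mulLeft A a -
        LinearMap.mulLeft A a ∘ₗ (LinearMap.mulLeft A r ∘ₗ φ) =
        LinearMap.mulLeft A r ∘ₗ (φ ∘ₗ LinearMap.mulLeft A a - LinearMap.mulLeft A a ∘ₗ φ) :=
      LinearMap.ext fun y => by
        simp only [LinearMap.sub_apply, LinearMap.comp_apply, LinearMap.mulLeft_apply, map_sub]
        ring
    rw [key]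
    exact ih _ (h a)

theorem isDiffOp_comp :
    ∀ (n m : ℕ) (φ ψ : R →ₗ[A] R), IsDiffOp A m φ → IsDiffOp A n ψ →
      IsDiffOp A (m + n) (φ ∘ₗ ψ) := by
  intro n
  induction n with
  | zero =>
    rintro m φ ψ hφ ⟨r, rfl⟩
    exact isDiffOp_comp_mulLeft A r m φ hφ
  | succ n ih =>
    intro m
    induction m with
    | zero =>
      rintro φ ψ ⟨r, rfl⟩ hψ
      rw [Nat.zero_add]
      exact isDiffOp_mulLeft_comp A r (n + 1) ψ hψ
    | succ m ihm =>
      intro φ ψ hφ hψ a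
      show IsDiffOp A (m + 1 + n) _
      have key : (φ ∘ₗ ψ) ∘ₗ LinearMap.mulLeft A a - LinearMap.mulLeft A a ∘ₗ (φ ∘ₗ ψ) =
          ((φ ∘ₗ LinearMap.mulLeft A a - LinearMap.mulLeft A a ∘ₗ φ) ∘ₗ ψ) +
          (φ ∘ₗ (ψ ∘ₗ LinearMap.mulLeft A a - LinearMap.mulLeft A a ∘ₗ ψ)) :=
        LinearMap.ext fun y => by
          simp only [LinearMap.sub_apply, LinearMap.add_apply, LinearMap.comp_apply,
            LinearMap.mulLeft_apply, map_sub]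
          ring
      rw [key]
      apply isDiffOp_add
      · exact isDiffOp_mono A _ (ihm _ ψ (hφ a) hψ) (by omega)
      · exact isDiffOp_mono A _ (ih (m + 1) φ _ hφ (hψ a)) (by omega)

/-- A differential operator of order at most `m` maps `(x^b)` into `(x^(b-m))`. -/
theorem diffOp_map_pow (x : R) :
    ∀ (m b : ℕ) (φ : R →ₗ[A] R), IsDiffOp A m φ → ∀ f ∈ Ideal.span {x ^ b},
      φ f ∈ Ideal.span {x ^ (b - m)} := by
  intro m
  induction m with
  | zero =>
    rintro b φ ⟨r, rfl⟩ f hf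
    simpa using Ideal.mul_mem_left _ r hf
  | succ m ih =>
    intro b
    induction b with
    | zero =>
      intro φ hφ f hf
      rw [Nat.zero_sub, pow_zero, Ideal.span_singleton_one]
      trivial
    | succ b ihb =>
      intro φ hφ f hf
      obtain ⟨g, hg⟩ := Ideal.mem_span_singleton.mp hf
      set h : R := x ^ b * g with hh
      set c : R →ₗ[A] R := φ ∘ₗ LinearMap.mulLeft A x - LinearMap.mulLeft A x ∘ₗ φ with hc
      have hmem : h ∈ Ideal.span {x ^ b} := Ideal.mem_span_singleton.mpr ⟨g, rfl⟩
      have h1 : c h ∈ Ideal.span {x ^ (b - m)} := ih b c (hφ x) h hmem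
      have h2 : φ h ∈ Ideal.span {x ^ (b - (m + 1))} := ihb φ hφ h hmem
      have heq : φ f = c h + x * φ h := by
        have hf' : f = x * h := by rw [hg, hh]; ring
        simp only [hc, LinearMap.sub_apply, LinearMap.comp_apply, LinearMap.mulLeft_apply, hf']
        ring
      have h3 : x * φ h ∈ Ideal.span {x ^ (b - m)} := by
        obtain ⟨u, hu⟩ := Ideal.mem_span_singleton.mp h2
        have hd : x ^ (b - m) ∣ x ^ (b - (m + 1) + 1) := pow_dvd_pow x (by omega)
        exact Ideal.mem_span_singleton.mpr
          (dvd_trans hd ⟨u, by rw [hu]; ring⟩)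
      rw [heq, Nat.succ_sub_succ]
      exact Ideal.add_mem _ h1 h3

end Aux

section MvAux

open MvPolynomial Finsupp

variable {k : Type*} [CommRing k] {σ : Type*}

theorem isDiffOp_pderiv [DecidableEq σ] (i : σ) :
    IsDiffOp k 1 ((pderiv i : Derivation k (MvPolynomial σ k) (MvPolynomial σ k)) :
      MvPolynomial σ k →ₗ[k] MvPolynomial σ k) := by
  intro a
  refine ⟨pderiv i a, LinearMap.ext fun f => ?_⟩
  simp only [LinearMap.sub_apply, LinearMap.comp_apply, LinearMap.mulLeft_apply,
    Derivation.coeFn_coe, pderiv_mul]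
  ring

theorem isDiffOp_pderiv_pow [DecidableEq σ] (i : σ) (j : ℕ) :
    IsDiffOp k j (((pderiv i : Derivation k (MvPolynomial σ k) (MvPolynomial σ k)) :
      MvPolynomial σ k →ₗ[k] MvPolynomial σ k) ^ j) := by
  induction j with
  | zero => exact ⟨1, LinearMap.ext fun y => by simp⟩
  | succ j ih =>
    have := isDiffOp_comp k j 1
      ((pderiv i : Derivation k (MvPolynomial σ k) (MvPolynomial σ k)) :
        MvPolynomial σ k →ₗ[k] MvPolynomial σ k)
      (((pderiv i : Derivation k (MvPolynomial σ k) (MvPolynomial σ k)) :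
        MvPolynomial σ k →ₗ[k] MvPolynomial σ k) ^ j) (isDiffOp_pderiv i) ih
    have he : (1 : ℕ) + j = j + 1 := by omega
    rw [he] at this
    rw [pow_succ']
    exact this

theorem pderiv_pow_monomial [DecidableEq σ] (i : σ) (j : ℕ) (s : σ →₀ ℕ) (a : k) :
    ((((pderiv i : Derivation k (MvPolynomial σ k) (MvPolynomial σ k)) :
      MvPolynomial σ k →ₗ[k] MvPolynomial σ k) ^ j)) (monomial s a) =
      monomial (s - Finsupp.single i j) (a * ((s i).descFactorial j : k)) := by
  induction j with
  | zero => simp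
  | succ j ih =>
    rw [pow_succ', Module.End.mul_apply, ih]
    simp only [Derivation.coeFn_coe, pderiv_monomial]
    congr 1
    · rw [tsub_tsub, ← Finsupp.single_add]
    · rw [Finsupp.tsub_apply, Finsupp.single_eq_same, Nat.descFactorial_succ]
      push_cast
      ring

theorem coeff_pderiv_pow [DecidableEq σ] (i : σ) (j : ℕ) (f : MvPolynomial σ k)
    (β : σ →₀ ℕ) (hj : j ≤ β i) :
    coeff (β - Finsupp.single i j)
      ((((pderiv i : Derivation k (MvPolynomial σ k) (MvPolynomial σ k)) :
        MvPolynomial σ k →ₗ[k] MvPolynomial σ k) ^ j) f) =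
      coeff β f * ((β i).descFactorial j : k) := by
  conv_lhs => rw [f.as_sum, map_sum]
  rw [coeff_sum]
  simp only [pderiv_pow_monomial]
  rw [Finset.sum_eq_single β]
  · rw [coeff_monomial, if_pos rfl]
  · intro s hs hne
    rw [coeff_monomial]
    split_ifs with he
    · by_cases hsi : j ≤ s i
      · exfalso
        apply hne
        ext l
        have hl := DFunLike.congr_fun he l
        rw [Finsupp.tsub_apply, Finsupp.tsub_apply] at hl
        by_cases hli : l = i
        · subst hli
          rw [Finsupp.single_eq_same] at hl
          omega
        · rw [Finsupp.single_eq_of_ne' (Ne.symm hli)] at hl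
          omega
      · have : (s i).descFactorial j = 0 :=
          Nat.descFactorial_eq_zero_iff_lt.mpr (by omega)
        rw [this]
        simp
    · rfl
  · intro hβ
    rw [MvPolynomial.notMem_support_iff.mp hβ]
    simp

theorem mem_span_monomial_one {m : σ →₀ ℕ} {p : MvPolynomial σ k} :
    p ∈ Ideal.span {(monomial m (1 : k) : MvPolynomial σ k)} ↔
      ∀ β ∈ p.support, m ≤ β := by
  have := MvPolynomial.mem_ideal_span_monomial_image (x := p) (s := ({m} : Set (σ →₀ ℕ)))
  simpa using this

end MvAux

section ProdAux

open MvPolynomial Finsupp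

theorem prod_univ_X_pow {k : Type*} [CommRing k] {d : ℕ} (s : Fin d →₀ ℕ) :
    ∏ i, (X i : MvPolynomial (Fin d) k) ^ s i = monomial s (1 : k) := by
  rw [← prod_X_pow_eq_monomial]
  exact (Finset.prod_subset (Finset.subset_univ _) fun i _ hi => by
    rw [Finsupp.notMem_support_iff.mp hi, pow_zero]).symm

end ProdAux

/-- The `n`-th differential power of the principal monomial ideal `(x^α)` is the
principal ideal generated by `∏_{i ∈ supp α} x_i^{α_i + n − 1}`. -/
theorem diffPow_principal_monomial {k : Type*} [Field k] [CharZero k] {d : ℕ}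
    (α : Fin d → ℕ) (n : ℕ) (hn : 0 < n) :
    diffPow k n (Ideal.span {∏ i, (MvPolynomial.X i : MvPolynomial (Fin d) k) ^ α i}) =
      Ideal.span {∏ i ∈ Finset.univ.filter fun i => α i ≠ 0,
        (MvPolynomial.X i : MvPolynomial (Fin d) k) ^ (α i + n - 1)} := by
  classical
  open MvPolynomial Finsupp in
  set A : Fin d →₀ ℕ := Finsupp.equivFunOnFinite.symm α with hAdef
  set B : Fin d →₀ ℕ :=
    Finsupp.equivFunOnFinite.symm (fun i => if α i ≠ 0 then α i + n - 1 else 0) with hBdef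
  have hAi : ∀ i, A i = α i := fun i => rfl
  have hBi : ∀ i, B i = if α i ≠ 0 then α i + n - 1 else 0 := fun i => rfl
  have hA : (∏ i, (X i : MvPolynomial (Fin d) k) ^ α i) = monomial A (1 : k) := by
    rw [← prod_univ_X_pow A]
    exact Finset.prod_congr rfl fun i _ => by rw [hAi]
  have hB : (∏ i ∈ Finset.univ.filter fun i => α i ≠ 0,
      (X i : MvPolynomial (Fin d) k) ^ (α i + n - 1)) = monomial B (1 : k) := by
    rw [← prod_univ_X_pow B]
    have h1 : (∏ i ∈ Finset.univ.filter fun i => α i ≠ 0,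
        (X i : MvPolynomial (Fin d) k) ^ (α i + n - 1)) =
        ∏ i ∈ Finset.univ.filter fun i => α i ≠ 0, (X i : MvPolynomial (Fin d) k) ^ B i :=
      Finset.prod_congr rfl fun i hi => by rw [hBi, if_pos (Finset.mem_filter.mp hi).2]
    rw [h1]
    exact Finset.prod_subset (Finset.filter_subset _ _) fun i _ hi => by
      have hα : α i = 0 := by simpa using hi
      rw [hBi, if_neg (by simp [hα]), pow_zero]
  rw [hA, hB]
  apply le_antisymm
  · -- diffPow ⊆ span (monomial B 1)
    intro f hf
    have hf' : ∀ φ : MvPolynomial (Fin d) k →ₗ[k] MvPolynomial (Fin d) k,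
        IsDiffOp k (n - 1) φ → φ f ∈ Ideal.span {(monomial A (1 : k) : MvPolynomial (Fin d) k)} :=
      hf
    rw [mem_span_monomial_one]
    intro β hβ
    rw [Finsupp.le_def]
    intro i
    rw [hBi]
    by_cases hα : α i = 0
    · simp [hα]
    rw [if_pos hα]
    set j : ℕ := min (β i) (n - 1) with hj
    have hop : IsDiffOp k (n - 1)
        (((pderiv i : Derivation k (MvPolynomial (Fin d) k) (MvPolynomial (Fin d) k)) :
          MvPolynomial (Fin d) k →ₗ[k] MvPolynomial (Fin d) k) ^ j) :=
      isDiffOp_mono k _ (isDiffOp_pderiv_pow i j) (min_le_right _ _)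
    have h1 := hf' _ hop
    have hc := coeff_pderiv_pow i j f β (min_le_left _ _)
    have hco : coeff β f ≠ 0 := MvPolynomial.mem_support_iff.mp hβ
    have hdesc : ((β i).descFactorial j : k) ≠ 0 := by
      rw [Nat.cast_ne_zero]
      intro h0
      have := Nat.descFactorial_eq_zero_iff_lt.mp h0
      omega
    have hsupp : β - Finsupp.single i j ∈
        ((((pderiv i : Derivation k (MvPolynomial (Fin d) k) (MvPolynomial (Fin d) k)) :
          MvPolynomial (Fin d) k →ₗ[k] MvPolynomial (Fin d) k) ^ j) f).support := by
      rw [MvPolynomial.mem_support_iff, hc]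
      exact mul_ne_zero hco hdesc
    have h2 := (mem_span_monomial_one.mp h1) _ hsupp
    have h3 : A i ≤ (β - Finsupp.single i j) i := h2 i
    rw [Finsupp.tsub_apply, Finsupp.single_eq_same, hAi] at h3
    have hα1 : 1 ≤ α i := Nat.one_le_iff_ne_zero.mpr hα
    omega
  · -- span (monomial B 1) ⊆ diffPow
    rw [Ideal.span_le, Set.singleton_subset_iff]
    intro φ hφ
    rw [mem_span_monomial_one]
    intro β hβ
    rw [Finsupp.le_def]
    intro i
    rw [hAi]
    by_cases hα : α i = 0
    · simp [hα]
    have hBival : B i = α i + n - 1 := by rw [hBi, if_pos hα]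
    have hmem : (monomial B (1 : k) : MvPolynomial (Fin d) k) ∈
        Ideal.span {(X i : MvPolynomial (Fin d) k) ^ (B i)} := by
      rw [X_pow_eq_monomial, Ideal.mem_span_singleton]
      refine ⟨monomial (B - Finsupp.single i (B i)) 1, ?_⟩
      rw [monomial_mul, one_mul, add_tsub_cancel_of_le (Finsupp.single_le_iff.mpr le_rfl)]
    have h1 := diffOp_map_pow k (X i : MvPolynomial (Fin d) k) (n - 1) (B i) φ hφ _ hmem
    have he : B i - (n - 1) = α i := by
      have hα1 : 1 ≤ α i := Nat.one_le_iff_ne_zero.mpr hα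
      omega
    rw [he, X_pow_eq_monomial, mem_span_monomial_one] at h1
    have h2 := h1 β hβ i
    rwa [Finsupp.single_eq_same] at h2
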